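/- Let β > 1, ω ∈ (0, 1/2), and θ₀ ∈ ℝ^p satisfy (√2/(1 − 2ω))·log β ≤ ‖θ₀‖₂. Then for each i ∈ {1,…,n}, P(exp(X_iᵀθ₀) ≥ β) ≥ ω, and moreover P(#{i ∈ {1,…,n} : exp(X_iᵀθ₀) ≥ β} ≥ ω·n/2) ≥ 1 − exp(−ω·n/12). -/

import Mathlib

open MeasureTheory ProbabilityTheory Real

open scoped NNReal ENNReal

lemma exp_split (a b u y : ℝ) (ha : 0 < a) (hb : 0 < b) :
    gaussianPDFReal 0 a.toNNReal (u - y) * gaussianPDFReal 0 b.toNNReal y =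
      gaussianPDFReal 0 (a + b).toNNReal u *
        ((Real.sqrt (π / ((a + b) / (2 * a * b))))⁻¹ *
          Real.exp (-((a + b) / (2 * a * b)) * (y - b * u / (a + b)) ^ 2)) := by
  have hab : 0 < a + b := by linarith
  simp only [gaussianPDFReal_def, Real.coe_toNNReal _ ha.le, Real.coe_toNNReal _ hb.le,
    Real.coe_toNNReal _ hab.le, sub_zero]
  have hc : (Real.sqrt (2*π*a))⁻¹ * (Real.sqrt (2*π*b))⁻¹
      = (Real.sqrt (2*π*(a+b)))⁻¹ * (Real.sqrt (π/((a+b)/(2*a*b))))⁻¹ := by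
    rw [← mul_inv, ← mul_inv, ← Real.sqrt_mul (by positivity), ← Real.sqrt_mul (by positivity)]
    congr 2
    field_simp
  have he : -(u-y)^2/(2*a) + -y^2/(2*b)
      = -u^2/(2*(a+b)) + -((a+b)/(2*a*b)) * (y - b*u/(a+b))^2 := by
    field_simp
    ring
  calc (Real.sqrt (2*π*a))⁻¹ * Real.exp (-(u-y)^2/(2*a)) *
        ((Real.sqrt (2*π*b))⁻¹ * Real.exp (-y^2/(2*b)))
      = ((Real.sqrt (2*π*a))⁻¹ * (Real.sqrt (2*π*b))⁻¹) *
        Real.exp (-(u-y)^2/(2*a) + -y^2/(2*b)) := by rw [Real.exp_add]; ring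
    _ = _ := by rw [hc, he, Real.exp_add]; ring

lemma conv_pdf (a b : ℝ) (ha : 0 < a) (hb : 0 < b) (u : ℝ) :
    ∫ y : ℝ, gaussianPDFReal 0 a.toNNReal (u - y) * gaussianPDFReal 0 b.toNNReal y =
      gaussianPDFReal 0 (a + b).toNNReal u := by
  have hab : 0 < a + b := by linarith
  set k := (a + b) / (2 * a * b) with hk_def
  have hk : 0 < k := by positivity
  have h1 : ∫ y : ℝ, Real.exp (-k * (y - b * u / (a + b)) ^ 2) = Real.sqrt (π / k) := by
    rw [integral_sub_right_eq_self (fun y => Real.exp (-k * y ^ 2)) (b * u / (a + b))]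
    exact integral_gaussian k
  simp_rw [exp_split a b u _ ha hb]
  rw [MeasureTheory.integral_const_mul, MeasureTheory.integral_const_mul, h1,
    inv_mul_cancel₀ (by positivity), mul_one]

lemma integrable_conv (a b : ℝ) (ha : 0 < a) (hb : 0 < b) (u : ℝ) :
    Integrable (fun y : ℝ =>
      gaussianPDFReal 0 a.toNNReal (u - y) * gaussianPDFReal 0 b.toNNReal y) := by
  simp_rw [exp_split a b u _ ha hb]
  have hk : 0 < (a + b) / (2 * a * b) := by positivity
  exact (((integrable_exp_neg_mul_sq hk).comp_sub_right (b * u / (a + b))).const_mul _).const_mul _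

lemma gauss_conv_key (a b : ℝ≥0) (ha : a ≠ 0) (hb : b ≠ 0) (u : ℝ) :
    (∫⁻ x : ℝ, gaussianPDF 0 a x * gaussianPDF 0 b (u - x)) = gaussianPDF 0 (a + b) u := by
  have hA : (0:ℝ) < a := by positivity
  have hB : (0:ℝ) < b := by positivity
  have hcoe : ((b:ℝ) + (a:ℝ)).toNNReal = a + b := by
    rw [← NNReal.coe_add, Real.toNNReal_coe, add_comm]
  have hreal : (∫ x : ℝ, gaussianPDFReal 0 b (u - x) * gaussianPDFReal 0 a x)
      = gaussianPDFReal 0 (a + b) u := by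
    have := conv_pdf (b:ℝ) (a:ℝ) hB hA u
    simpa [Real.toNNReal_coe, hcoe] using this
  have hint : Integrable (fun x : ℝ =>
      gaussianPDFReal 0 b (u - x) * gaussianPDFReal 0 a x) := by
    have := integrable_conv (b:ℝ) (a:ℝ) hB hA u
    simpa [Real.toNNReal_coe] using this
  calc (∫⁻ x : ℝ, gaussianPDF 0 a x * gaussianPDF 0 b (u - x))
      = ∫⁻ x : ℝ, ENNReal.ofReal (gaussianPDFReal 0 b (u - x) * gaussianPDFReal 0 a x) := by
        refine lintegral_congr fun x => ?_
        simp only [gaussianPDF]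
        rw [mul_comm, ← ENNReal.ofReal_mul (gaussianPDFReal_nonneg 0 b _)]
    _ = ENNReal.ofReal (∫ x : ℝ, gaussianPDFReal 0 b (u - x) * gaussianPDFReal 0 a x) := by
        rw [ofReal_integral_eq_lintegral_ofReal hint]
        exact Filter.Eventually.of_forall fun x =>
          mul_nonneg (gaussianPDFReal_nonneg _ _ _) (gaussianPDFReal_nonneg _ _ _)
    _ = gaussianPDF 0 (a + b) u := by rw [hreal]; rfl

lemma gauss_conv (a b : ℝ≥0) :
    Measure.map (fun z : ℝ × ℝ => z.1 + z.2)
      ((gaussianReal 0 a).prod (gaussianReal 0 b)) = gaussianReal 0 (a + b) := by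
  have hadd : Measurable (fun z : ℝ × ℝ => z.1 + z.2) := measurable_fst.add measurable_snd
  rcases eq_or_ne a 0 with rfl | ha
  · rw [gaussianReal_zero_var, Measure.dirac_prod,
      Measure.map_map hadd measurable_prodMk_left, zero_add]
    have h0 : ((fun z : ℝ × ℝ => z.1 + z.2) ∘ Prod.mk (0:ℝ)) = id := by funext y; simp
    rw [h0, Measure.map_id]
  rcases eq_or_ne b 0 with rfl | hb
  · rw [gaussianReal_zero_var, Measure.prod_dirac,
      Measure.map_map hadd measurable_prodMk_right, add_zero]
    have h0 : ((fun z : ℝ × ℝ => z.1 + z.2) ∘ fun x : ℝ => (x, (0:ℝ))) = id := by funext y; simp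
    rw [h0, Measure.map_id]
  -- main case
  have hab : a + b ≠ 0 := by simp [ha]
  have hf : Measurable (gaussianPDF 0 a) := measurable_gaussianPDF 0 a
  have hg : Measurable (gaussianPDF 0 b) := measurable_gaussianPDF 0 b
  set f := gaussianPDF 0 a
  set g := gaussianPDF 0 b
  ext s hs
  rw [Measure.map_apply hadd hs, gaussianReal_of_var_ne_zero 0 ha,
    gaussianReal_of_var_ne_zero 0 hb, gaussianReal_of_var_ne_zero 0 hab]
  set H : ℝ → ℝ≥0∞ := fun x => ∫⁻ y, s.indicator (fun _ => (1:ℝ≥0∞)) (x + y) * g y with hH_def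
  have hFm : Measurable (fun q : ℝ × ℝ =>
      s.indicator (fun _ => (1:ℝ≥0∞)) (q.1 + q.2) * g q.2) :=
    ((measurable_const.indicator hs).comp hadd).mul (hg.comp measurable_snd)
  have hHm : Measurable H := hFm.lintegral_prod_right'
  have hH : ∀ x : ℝ, (volume.withDensity g)
      (Prod.mk x ⁻¹' ((fun z : ℝ × ℝ => z.1 + z.2) ⁻¹' s)) = H x := by
    intro x
    have hmset : MeasurableSet (Prod.mk x ⁻¹' ((fun z : ℝ × ℝ => z.1 + z.2) ⁻¹' s)) :=
      measurable_prodMk_left (hadd hs)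
    rw [withDensity_apply _ hmset, ← lintegral_indicator hmset]
    refine lintegral_congr fun y => ?_
    by_cases hxy : x + y ∈ s <;>
      simp [Set.indicator, hxy, Set.mem_preimage]
  calc ((volume.withDensity f).prod (volume.withDensity g))
        ((fun z : ℝ × ℝ => z.1 + z.2) ⁻¹' s)
      = ∫⁻ x, (volume.withDensity g) (Prod.mk x ⁻¹' ((fun z : ℝ × ℝ => z.1 + z.2) ⁻¹' s))
          ∂(volume.withDensity f) := Measure.prod_apply (hadd hs)
    _ = ∫⁻ x, H x ∂(volume.withDensity f) := lintegral_congr hH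
    _ = ∫⁻ x, (f * H) x ∂volume := lintegral_withDensity_eq_lintegral_mul volume hf hHm
    _ = ∫⁻ x, ∫⁻ y, f x * (s.indicator (fun _ => (1:ℝ≥0∞)) (x + y) * g y) := by
        refine lintegral_congr fun x => ?_
        simp only [Pi.mul_apply, hH_def]
        have hm1 : Measurable fun y : ℝ => s.indicator (fun _ => (1:ℝ≥0∞)) (x + y) * g y :=
          ((measurable_const.indicator hs).comp (measurable_const.add measurable_id)).mul hg
        rw [← lintegral_const_mul (f x) hm1]
    _ = ∫⁻ x, ∫⁻ u, f x * (s.indicator (fun _ => (1:ℝ≥0∞)) u * g (u - x)) := by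
        refine lintegral_congr fun x => ?_
        rw [← lintegral_add_right_eq_self
          (fun u => f x * (s.indicator (fun _ => (1:ℝ≥0∞)) u * g (u - x))) x]
        refine lintegral_congr fun y => ?_
        rw [add_sub_cancel_right, add_comm]
    _ = ∫⁻ u, ∫⁻ x, f x * (s.indicator (fun _ => (1:ℝ≥0∞)) u * g (u - x)) := by
        refine lintegral_lintegral_swap ?_
        exact ((hf.comp measurable_fst).mul
          (((measurable_const.indicator hs).comp measurable_snd).mul
            (hg.comp (measurable_snd.sub measurable_fst)))).aemeasurable
    _ = ∫⁻ u, s.indicator (fun _ => (1:ℝ≥0∞)) u * ∫⁻ x, f x * g (u - x) := by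
        refine lintegral_congr fun u => ?_
        have hm2 : Measurable fun x : ℝ => f x * g (u - x) :=
          hf.mul (hg.comp (measurable_const.sub measurable_id))
        rw [← lintegral_const_mul (s.indicator (fun _ => (1:ℝ≥0∞)) u) hm2]
        exact lintegral_congr fun x => by ring
    _ = ∫⁻ u, s.indicator (fun _ => (1:ℝ≥0∞)) u * gaussianPDF 0 (a + b) u := by
        refine lintegral_congr fun u => ?_
        rw [gauss_conv_key a b ha hb u]
    _ = ∫⁻ u in s, gaussianPDF 0 (a + b) u := by
        rw [← lintegral_indicator hs]
        refine lintegral_congr fun u => ?_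
        by_cases hu : u ∈ s <;> simp [Set.indicator, hu]
    _ = (volume.withDensity (gaussianPDF 0 (a + b))) s := (withDensity_apply _ hs).symm

lemma measurable_lin {p : ℕ} (θ : Fin p → ℝ) :
    Measurable (fun y : Fin p → ℝ => ∑ j, y j * θ j) :=
  Finset.measurable_sum _ fun j _ => (measurable_pi_apply j).mul_const _

lemma gauss_map_sum (p : ℕ) (θ : Fin p → ℝ) :
    Measure.map (fun y : Fin p → ℝ => ∑ j, y j * θ j)
      (Measure.pi fun _ : Fin p => gaussianReal 0 1) =
    gaussianReal 0 (∑ j, θ j ^ 2).toNNReal := by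
  induction p with
  | zero =>
      have : (fun y : Fin 0 → ℝ => ∑ j, y j * θ j) = fun _ => (0:ℝ) := by
        funext y; simp
      rw [this, Measure.map_const]
      simp [gaussianReal_zero_var]
  | succ p ih =>
      set e := MeasurableEquiv.piFinSuccAbove (fun _ : Fin (p+1) => ℝ) 0
      have hmp := measurePreserving_piFinSuccAbove (fun _ : Fin (p+1) => gaussianReal 0 1) 0
      set S : (Fin p → ℝ) → ℝ := fun w => ∑ j, w j * θ j.succ with hS_def
      have hSm : Measurable S := Finset.measurable_sum _ fun j _ =>
        (measurable_pi_apply j).mul_const _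
      have hfe : (fun y : Fin (p+1) → ℝ => ∑ j, y j * θ j) =
          ((fun z : ℝ × ℝ => z.1 + z.2) ∘ (Prod.map (fun x : ℝ => x * θ 0) S)) ∘ e := by
        funext y
        simp only [Function.comp_apply, MeasurableEquiv.piFinSuccAbove_apply, Prod.map,
          Fin.sum_univ_succ, hS_def, Fin.removeNth, Fin.succAbove_zero]
        rfl
      rw [hfe, ← Measure.map_map (g := (fun z : ℝ × ℝ => z.1 + z.2) ∘ Prod.map (fun x : ℝ => x * θ 0) S) ((measurable_fst.add measurable_snd).comp ((measurable_mul_const (θ 0)).prodMap hSm)) e.measurable, hmp.map_eq,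
        ← Measure.map_map (g := fun z : ℝ × ℝ => z.1 + z.2) (measurable_fst.add measurable_snd)
          ((measurable_mul_const (θ 0)).prodMap hSm),
        ← Measure.map_prod_map _ _ (measurable_mul_const (θ 0)) hSm]
      have h0 : (fun j : Fin p => gaussianReal 0 1) = fun j : Fin p =>
          gaussianReal 0 1 := rfl
      have hmap1 : Measure.map (fun x : ℝ => x * θ 0) (gaussianReal 0 1)
          = gaussianReal 0 (NNReal.mk (θ 0 ^ 2) (sq_nonneg _)) := by
        rw [gaussianReal_map_mul_const (θ 0)]
        norm_num
      have hpi : (Measure.pi fun j : Fin p => gaussianReal 0 1) =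
          Measure.pi fun j : Fin p => gaussianReal 0 1 := rfl
      have : Measure.map S (Measure.pi fun _ : Fin p => gaussianReal 0 1)
          = gaussianReal 0 (∑ j : Fin p, θ j.succ ^ 2).toNNReal := ih _
      rw [hmap1]
      · rw [show (Measure.pi fun j : Fin p =>
            gaussianReal ((fun _ : Fin (p+1) => (0:ℝ)) ((0:Fin (p+1)).succAbove j))
              ((fun _ : Fin (p+1) => (1:ℝ≥0)) ((0:Fin (p+1)).succAbove j))) =
            Measure.pi fun _ : Fin p => gaussianReal 0 1 from rfl, this, gauss_conv]
        congr 1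
        apply NNReal.coe_injective
        rw [NNReal.coe_add]
        rw [Real.coe_toNNReal _ (Finset.sum_nonneg fun j _ => sq_nonneg _),
          Real.coe_toNNReal _ (Finset.sum_nonneg fun j _ => sq_nonneg _)]
        simp [Fin.sum_univ_succ]

lemma gauss_half (v : ℝ≥0) : ENNReal.ofReal (1/2) ≤ gaussianReal 0 v (Set.Ici 0) := by
  have hmap : Measure.map (fun x : ℝ => x * (-1)) (gaussianReal 0 v) = gaussianReal 0 v := by
    rw [gaussianReal_map_mul_const (-1)]
    norm_num
  have hsym : gaussianReal 0 v (Set.Iic 0) = gaussianReal 0 v (Set.Ici 0) := by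
    conv_rhs => rw [← hmap]
    rw [Measure.map_apply (measurable_mul_const _) measurableSet_Ici]
    congr 1
    ext x
    simp [mul_neg_one]
  have hunion : (1:ℝ≥0∞) ≤ gaussianReal 0 v (Set.Ici 0) + gaussianReal 0 v (Set.Ici 0) := by
    have h1 : (Set.univ : Set ℝ) ⊆ Set.Iic 0 ∪ Set.Ici 0 := by
      intro x _
      rcases le_total x 0 with h | h
      · exact Or.inl h
      · exact Or.inr h
    calc (1:ℝ≥0∞) = gaussianReal 0 v Set.univ := (measure_univ).symm
      _ ≤ gaussianReal 0 v (Set.Iic 0 ∪ Set.Ici 0) := measure_mono h1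
      _ ≤ gaussianReal 0 v (Set.Iic 0) + gaussianReal 0 v (Set.Ici 0) := measure_union_le _ _
      _ = _ := by rw [hsym]
  have h2 : (2:ℝ≥0∞)⁻¹ ≤ gaussianReal 0 v (Set.Ici 0) := by
    rw [← two_mul] at hunion
    calc (2:ℝ≥0∞)⁻¹ = 2⁻¹ * 1 := (mul_one _).symm
      _ ≤ 2⁻¹ * (2 * gaussianReal 0 v (Set.Ici 0)) := mul_le_mul' le_rfl hunion
      _ = (2⁻¹ * 2) * gaussianReal 0 v (Set.Ici 0) := (mul_assoc _ _ _).symm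
      _ = gaussianReal 0 v (Set.Ici 0) := by
          rw [ENNReal.inv_mul_cancel (by norm_num) (by norm_num), one_mul]
  refine le_trans (le_of_eq ?_) h2
  rw [show (1/2:ℝ) = (2:ℝ)⁻¹ by norm_num, ENNReal.ofReal_inv_of_pos two_pos]
  norm_num

lemma gauss_tail (v : ℝ≥0) (hv : v ≠ 0) (c : ℝ) (hc : 0 ≤ c) :
    ENNReal.ofReal (1/2 - c * (Real.sqrt (2*π*v))⁻¹) ≤ gaussianReal 0 v (Set.Ici c) := by
  have hbound : gaussianReal 0 v (Set.Ico 0 c) ≤ ENNReal.ofReal (c * (Real.sqrt (2*π*v))⁻¹) := by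
    rw [gaussianReal_apply 0 hv _]
    calc ∫⁻ x in Set.Ico 0 c, gaussianPDF 0 v x
        ≤ ∫⁻ _ in Set.Ico 0 c, ENNReal.ofReal ((Real.sqrt (2*π*v))⁻¹) := by
          refine setLIntegral_mono measurable_const fun x _ => ?_
          refine ENNReal.ofReal_le_ofReal ?_
          rw [gaussianPDFReal_def]
          simp only [sub_zero]
          calc (Real.sqrt (2*π*v))⁻¹ * Real.exp (-x^2 / (2*v))
              ≤ (Real.sqrt (2*π*v))⁻¹ * 1 := by
                refine mul_le_mul_of_nonneg_left ?_ (by positivity)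
                rw [← Real.exp_zero]
                have hnum : -x^2 ≤ 0 := neg_nonpos.mpr (sq_nonneg x)
                have hden : (0:ℝ) ≤ 2*(v:ℝ) := by positivity
                exact Real.exp_le_exp.mpr (div_nonpos_of_nonpos_of_nonneg hnum hden)
          _ = _ := mul_one _
      _ = ENNReal.ofReal ((Real.sqrt (2*π*v))⁻¹) * volume (Set.Ico 0 c) := setLIntegral_const _ _
      _ = ENNReal.ofReal (c * (Real.sqrt (2*π*v))⁻¹) := by
          rw [Real.volume_Ico, sub_zero, ← ENNReal.ofReal_mul (by positivity), mul_comm]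
  have hsub : Set.Ici (0:ℝ) ⊆ Set.Ici c ∪ Set.Ico 0 c := by
    intro x hx
    rcases le_or_gt c x with h | h
    · exact Or.inl h
    · exact Or.inr ⟨hx, h⟩
  have hkey : ENNReal.ofReal (1/2) ≤ gaussianReal 0 v (Set.Ici c)
      + ENNReal.ofReal (c * (Real.sqrt (2*π*v))⁻¹) :=
    le_trans (gauss_half v) (le_trans (measure_mono hsub)
      (le_trans (measure_union_le _ _) (add_le_add le_rfl hbound)))
  rw [ENNReal.ofReal_sub _ (by positivity)]
  exact tsub_le_iff_right.mpr hkey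

lemma pi_eval_apply {n : ℕ} {α : Type*} [MeasurableSpace α] (μ : Measure α)
    [SigmaFinite μ] [IsProbabilityMeasure μ] (i : Fin n) (A : Set α) :
    Measure.pi (fun _ : Fin n => μ) ((fun x : Fin n → α => x i) ⁻¹' A) = μ A := by
  classical
  have h1 : (fun x : Fin n → α => x i) ⁻¹' A
      = Set.pi Set.univ (fun j => if j = i then A else Set.univ) := by
    ext y
    simp only [Set.mem_preimage, Set.mem_univ_pi]
    constructor
    · intro h j
      by_cases hj : j = i
      · subst hj; simpa using h
      · simp [hj]
    · intro h
      have := h i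
      simpa using this
  rw [h1, Measure.pi_pi]
  rw [Finset.prod_eq_single i (fun j _ hj => by simp [hj]) (by simp)]
  simp

lemma iIndepFun_comp_eval {n : ℕ} {α : Type*} [MeasurableSpace α] (μ : Measure α)
    [SigmaFinite μ] [IsProbabilityMeasure μ] (g : α → ℝ) (hg : Measurable g) :
    iIndepFun
      (fun (i : Fin n) (x : Fin n → α) => g (x i)) (Measure.pi fun _ => μ) := by
  classical
  rw [iIndepFun_iff_measure_inter_preimage_eq_mul]
  intro S sets hsets
  have h1 : (⋂ i ∈ S, (fun x : Fin n → α => g (x i)) ⁻¹' sets i)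
      = Set.pi Set.univ (fun j => if j ∈ S then g ⁻¹' sets j else Set.univ) := by
    ext y
    simp only [Set.mem_iInter, Set.mem_preimage, Set.mem_univ_pi]
    constructor
    · intro h j
      by_cases hj : j ∈ S
      · simpa [hj] using h j hj
      · simp [hj]
    · intro h j hj
      have := h j
      simpa [hj] using this
  rw [h1, Measure.pi_pi]
  rw [← Finset.prod_subset (Finset.subset_univ S) (fun j _ hj => by simp [hj])]
  refine Finset.prod_congr rfl fun j hj => ?_
  rw [if_pos hj]
  exact (pi_eval_apply μ j _).symm ▸ rfl

lemma row_prob (p : ℕ) (β ω : ℝ) (hβ : 1 < β) (hω : 0 < ω) (hω2 : ω < 1 / 2)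
    (θ : Fin p → ℝ)
    (hcond : Real.sqrt 2 / (1 - 2 * ω) * Real.log β ≤ Real.sqrt (∑ j, θ j ^ 2)) :
    ENNReal.ofReal ω ≤ (Measure.pi fun _ : Fin p => gaussianReal 0 1)
      {y | β ≤ Real.exp (∑ j, y j * θ j)} := by
  set c := Real.log β with hc_def
  have hc : 0 < c := Real.log_pos hβ
  have h2ω : 0 < 1 - 2 * ω := by linarith
  have hr : (0:ℝ) < Real.sqrt 2 := by positivity
  have hL : 0 < Real.sqrt 2 / (1 - 2 * ω) * c := by positivity
  set V := ∑ j, θ j ^ 2 with hV_def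
  have hsV : 0 < Real.sqrt V := lt_of_lt_of_le hL hcond
  have hV : 0 < V := Real.sqrt_pos.mp hsV
  have hv : V.toNNReal ≠ 0 := by
    simp [Real.toNNReal_eq_zero, not_le, hV]
  have hvv : ((V.toNNReal : ℝ≥0) : ℝ) = V := Real.coe_toNNReal _ hV.le
  -- real arithmetic
  have hs2 : Real.sqrt 2 * Real.sqrt 2 = 2 := Real.mul_self_sqrt two_pos.le
  have harith : ω ≤ 1/2 - c * (Real.sqrt (2 * π * V))⁻¹ := by
    have hmono : Real.sqrt 2 * Real.sqrt V ≤ Real.sqrt (2 * π * V) := by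
      rw [← Real.sqrt_mul two_pos.le]
      exact Real.sqrt_le_sqrt (by nlinarith [Real.pi_gt_three])
    have hpos2 : 0 < Real.sqrt 2 * Real.sqrt V := by positivity
    have hstep1 : c * (Real.sqrt (2 * π * V))⁻¹ ≤ c * (Real.sqrt 2 * Real.sqrt V)⁻¹ := by
      gcongr
    have hcond' : Real.sqrt 2 * c ≤ (1 - 2 * ω) * Real.sqrt V := by
      rw [div_mul_eq_mul_div, div_le_iff₀ h2ω] at hcond
      linarith [hcond]
    have hstep2 : c * (Real.sqrt 2 * Real.sqrt V)⁻¹ ≤ (1 - 2 * ω) / 2 := by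
      rw [← div_eq_mul_inv, div_le_div_iff₀ hpos2 two_pos]
      nlinarith [mul_le_mul_of_nonneg_left hcond' hr.le]
    linarith
  have hset : {y : Fin p → ℝ | β ≤ Real.exp (∑ j, y j * θ j)}
      = (fun y : Fin p → ℝ => ∑ j, y j * θ j) ⁻¹' (Set.Ici c) := by
    ext y
    simp only [Set.mem_setOf_eq, Set.mem_preimage, Set.mem_Ici, hc_def]
    rw [← Real.exp_log (lt_trans one_pos hβ), Real.exp_le_exp, Real.log_exp]
  rw [hset, ← Measure.map_apply (measurable_lin θ) measurableSet_Ici, gauss_map_sum p θ]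
  refine le_trans (ENNReal.ofReal_le_ofReal ?_) (gauss_tail V.toNNReal hv c hc.le)
  rw [hvv]
  exact harith

/-- The law of an `n × p` matrix with i.i.d. standard normal entries. -/
noncomputable def gaussMat (n p : ℕ) : Measure (Fin n → Fin p → ℝ) :=
  Measure.pi fun _ : Fin n => Measure.pi fun _ : Fin p => gaussianReal 0 1

/-- lower bound on the probability that many linear predictors are
large. -/
theorem stmt_12 (n p : ℕ) (hn : 1 ≤ n) (hp : 1 ≤ p)
    (β ω : ℝ) (hβ : 1 < β) (hω : 0 < ω) (hω2 : ω < 1 / 2)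
    (θ₀ : Fin p → ℝ)
    (hcond : Real.sqrt 2 / (1 - 2 * ω) * Real.log β ≤ Real.sqrt (∑ j, θ₀ j ^ 2)) :
    (∀ i : Fin n,
      ENNReal.ofReal ω ≤ gaussMat n p {x | β ≤ Real.exp (∑ j, x i j * θ₀ j)}) ∧
    1 - ENNReal.ofReal (Real.exp (-(ω * n) / 12)) ≤
      gaussMat n p {x | ω * n / 2 ≤
        ((Finset.univ.filter fun i : Fin n => β ≤ Real.exp (∑ j, x i j * θ₀ j)).card : ℝ)} := by
  classical
  set νrow : Measure (Fin p → ℝ) := Measure.pi fun _ : Fin p => gaussianReal 0 1 with hνrow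
  set A : Set (Fin p → ℝ) := {w | β ≤ Real.exp (∑ j, w j * θ₀ j)} with hA_def
  have hA : MeasurableSet A :=
    measurableSet_le measurable_const (Real.measurable_exp.comp (measurable_lin θ₀))
  have hPdef : gaussMat n p = Measure.pi (fun _ : Fin n => νrow) := rfl
  have hrow : ENNReal.ofReal ω ≤ νrow A := row_prob p β ω hβ hω hω2 θ₀ hcond
  have hpart1 : ∀ i : Fin n,
      ENNReal.ofReal ω ≤ gaussMat n p {x | β ≤ Real.exp (∑ j, x i j * θ₀ j)} := by
    intro i
    have hset : {x : Fin n → Fin p → ℝ | β ≤ Real.exp (∑ j, x i j * θ₀ j)}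
        = (fun x : Fin n → Fin p → ℝ => x i) ⁻¹' A := rfl
    rw [hset, hPdef, pi_eval_apply νrow i A]
    exact hrow
  refine ⟨hpart1, ?_⟩
  -- Chernoff part
  set g : (Fin p → ℝ) → ℝ := A.indicator (fun _ => 1) with hg_def
  have hgm : Measurable g := measurable_const.indicator hA
  set Y : Fin n → (Fin n → Fin p → ℝ) → ℝ := fun i x => g (x i) with hY_def
  have hYm : ∀ i, Measurable (Y i) := fun i => hgm.comp (measurable_pi_apply i)
  have hindep : iIndepFun Y
      (Measure.pi fun _ : Fin n => νrow) := iIndepFun_comp_eval νrow g hgm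
  set P : Measure (Fin n → Fin p → ℝ) := Measure.pi fun _ : Fin n => νrow with hP_def
  haveI : IsProbabilityMeasure P := by infer_instance
  set q : ℝ := (νrow A).toReal with hq_def
  have hνtop : νrow A ≠ ⊤ := measure_ne_top _ _
  have hq1 : ω ≤ q := (ENNReal.ofReal_le_iff_le_toReal hνtop).mp hrow
  have hq2 : q ≤ 1 := by
    have := prob_le_one (μ := νrow) (s := A)
    calc q ≤ (1:ℝ≥0∞).toReal := ENNReal.toReal_mono (by simp) this
      _ = 1 := by simp
  set t : ℝ := -Real.log 2 with ht_def
  have ht : t ≤ 0 := neg_nonpos.mpr (Real.log_nonneg one_le_two)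
  have het : Real.exp t = 1/2 := by
    rw [ht_def, Real.exp_neg, Real.exp_log two_pos]
    norm_num
  have hYind : ∀ i, Y i = Set.indicator ((fun x : Fin n → Fin p → ℝ => x i) ⁻¹' A)
      (fun _ => (1:ℝ)) := by
    intro i
    funext x
    by_cases hx : x i ∈ A <;>
      simp [hY_def, hg_def, Set.indicator_apply, hx]
  have hYrw : ∀ i, (fun x => Real.exp (t * Y i x))
      = fun x => 1 + (Real.exp t - 1) * Y i x := by
    intro i
    funext x
    by_cases hx : x i ∈ A
    · simp [hY_def, hg_def, Set.indicator_of_mem hx]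
    · simp [hY_def, hg_def, Set.indicator_of_notMem hx]
  have hYint : ∀ i, Integrable (Y i) P := by
    intro i
    rw [hYind i]
    exact (integrable_const (1:ℝ)).indicator (hA.preimage (measurable_pi_apply i))
  have hint : ∀ i : Fin n, Integrable (fun x => Real.exp (t * Y i x)) P := by
    intro i
    rw [hYrw i]
    exact (integrable_const (1:ℝ)).add ((hYint i).const_mul _)
  have hPBi : ∀ i : Fin n, P ((fun x : Fin n → Fin p → ℝ => x i) ⁻¹' A) = νrow A :=
    fun i => pi_eval_apply νrow i A
  have hmgf : ∀ i : Fin n, mgf (Y i) P t = 1 + (Real.exp t - 1) * q := by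
    intro i
    rw [mgf]
    rw [hYrw i]
    rw [integral_add (integrable_const _) ((hYint i).const_mul _), integral_const,
      integral_const_mul]
    have hYint_eq : ∫ x, Y i x ∂P = q := by
      rw [hYind i]
      rw [integral_indicator_const (1:ℝ) (hA.preimage (measurable_pi_apply i))]
      rw [measureReal_def, hPBi i]
      simp [hq_def]
    rw [hYint_eq]
    simp
  have hintS : Integrable (fun x => Real.exp (t * (∑ i, Y i) x)) P :=
    hindep.integrable_exp_mul_sum hYm (fun i _ => hint i)
  have hcher := measure_le_le_exp_mul_mgf (X := ∑ i, Y i) (μ := P) (t := t)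
    (ω * n / 2) ht hintS
  have hmgfS : mgf (∑ i, Y i) P t = (1 + (Real.exp t - 1) * q) ^ n := by
    rw [hindep.mgf_sum hYm Finset.univ]
    simp [hmgf]
  have hq0 : 0 ≤ 1 - q/2 := by linarith
  have hbnd : Real.exp (-t * (ω * n / 2)) * mgf (∑ i, Y i) P t
      ≤ Real.exp (-(ω * n) / 12) := by
    rw [hmgfS, het]
    have h1 : (1 + (1/2 - 1) * q) = 1 - q/2 := by ring
    rw [h1]
    have h2 : (1 - q/2) ^ n ≤ Real.exp (-(q/2)) ^ n := by
      refine pow_le_pow_left₀ hq0 ?_ n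
      have := Real.add_one_le_exp (-(q/2))
      linarith
    have h3 : Real.exp (-(q/2)) ^ n = Real.exp (n * (-(q/2))) := (Real.exp_nat_mul _ n).symm
    calc Real.exp (-t * (ω * n / 2)) * (1 - q/2) ^ n
        ≤ Real.exp (-t * (ω * n / 2)) * Real.exp (n * (-(q/2))) := by
          rw [h3] at h2
          exact mul_le_mul_of_nonneg_left h2 (Real.exp_pos _).le
      _ = Real.exp (-t * (ω * n / 2) + n * (-(q/2))) := (Real.exp_add _ _).symm
      _ ≤ Real.exp (-(ω * n) / 12) := by
          refine Real.exp_le_exp.mpr ?_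
          have hM : 0 ≤ ω * n := mul_nonneg hω.le (Nat.cast_nonneg n)
          have hnq : ω * (n:ℝ) ≤ q * n := mul_le_mul_of_nonneg_right hq1 (Nat.cast_nonneg n)
          have hlog : Real.log 2 ≤ 5/6 := le_of_lt (lt_of_lt_of_le Real.log_two_lt_d9
            (by norm_num))
          have hlogM : Real.log 2 * (ω * n) ≤ 5/6 * (ω * n) :=
            mul_le_mul_of_nonneg_right hlog hM
          rw [ht_def]
          nlinarith [hlogM, hnq, hM]
  set C : Set (Fin n → Fin p → ℝ) := {x | (∑ i, Y i) x ≤ ω * n / 2} with hC_def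
  have hC : P C ≤ ENNReal.ofReal (Real.exp (-(ω * n) / 12)) := by
    rw [ENNReal.le_ofReal_iff_toReal_le (measure_ne_top _ _) (Real.exp_pos _).le]
    exact le_trans hcher hbnd
  set T : Set (Fin n → Fin p → ℝ) := {x | ω * n / 2 ≤
    ((Finset.univ.filter fun i : Fin n => β ≤ Real.exp (∑ j, x i j * θ₀ j)).card : ℝ)}
    with hT_def
  have hcount : ∀ x : Fin n → Fin p → ℝ,
      ((Finset.univ.filter fun i : Fin n => β ≤ Real.exp (∑ j, x i j * θ₀ j)).card : ℝ)
      = (∑ i, Y i) x := by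
    intro x
    rw [Finset.sum_apply]
    rw [Finset.card_filter]
    push_cast
    refine Finset.sum_congr rfl fun i _ => ?_
    by_cases hx : β ≤ Real.exp (∑ j, x i j * θ₀ j)
    · simp [hY_def, hg_def, Set.indicator_apply, hA_def, Set.mem_setOf_eq, hx]
    · simp [hY_def, hg_def, Set.indicator_apply, hA_def, Set.mem_setOf_eq, hx]
  have hcover : (1:ℝ≥0∞) ≤ P T + P C := by
    have huniv : (Set.univ : Set (Fin n → Fin p → ℝ)) ⊆ T ∪ C := by
      intro x _
      rcases le_or_gt (ω * n / 2)
        ((Finset.univ.filter fun i : Fin n =>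
          β ≤ Real.exp (∑ j, x i j * θ₀ j)).card : ℝ) with h | h
      · exact Or.inl h
      · refine Or.inr ?_
        have := hcount x
        simp only [hC_def, Set.mem_setOf_eq]
        linarith [this ▸ h.le]
    calc (1:ℝ≥0∞) = P Set.univ := (measure_univ).symm
      _ ≤ P (T ∪ C) := measure_mono huniv
      _ ≤ P T + P C := measure_union_le _ _
  show 1 - ENNReal.ofReal (Real.exp (-(ω * n) / 12)) ≤ P T
  refine tsub_le_iff_right.mpr ?_
  exact le_trans hcover (add_le_add le_rfl hC)
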